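/- If K ⊆ ℝ is a nonempty compact set and c < d are real numbers, then the Minkowski sum K + [c, d] is a finite union of non-degenerate compact intervals: there exist N ≥ 1 and real numbers a_1, …, a_N, b_1, …, b_N with a_i < b_i for each i and K + [c, d] = ⋃_{i=1}^N [a_i, b_i]. -/

import Mathlib

open scoped Pointwise

/-- Key lemma: if a compact nonempty `K'` is contained in an interval of radius
`(d-c)/2` around `x`, then `K' + [c,d]` is the interval `[sInf K' + c, sSup K' + d]`. -/
lemma add_Icc_eq_Icc_of_small (K' : Set ℝ) (hK' : IsCompact K') (hne : K'.Nonempty)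
    (c d : ℝ) (hcd : c < d) (x : ℝ)
    (hsub : K' ⊆ Set.Icc (x - (d - c) / 2) (x + (d - c) / 2)) :
    K' + Set.Icc c d = Set.Icc (sInf K' + c) (sSup K' + d) := by
  have hbdd := hK'.bddBelow
  have hbdd' := hK'.bddAbove
  have hInf : sInf K' ∈ K' := hK'.sInf_mem hne
  have hSup : sSup K' ∈ K' := hK'.sSup_mem hne
  ext s
  constructor
  · rintro ⟨y, hy, t, ht, rfl⟩
    exact ⟨add_le_add (csInf_le hbdd hy) ht.1, add_le_add (le_csSup hbdd' hy) ht.2⟩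
  · rintro ⟨h1, h2⟩
    rcases le_total s (x + (c + d) / 2) with h | h
    · refine ⟨sInf K', hInf, s - sInf K', ⟨by linarith, ?_⟩, by ring⟩
      have := (hsub hInf).1
      linarith
    · refine ⟨sSup K', hSup, s - sSup K', ⟨?_, by linarith⟩, by ring⟩
      have := (hsub hSup).2
      linarith

/-- The Minkowski sum of a nonempty compact set `K ⊆ ℝ` and a
non-degenerate compact interval `[c, d]` is a finite union of non-degenerate compact
intervals. -/
theorem compact_add_Icc_finite_union_of_intervals
    (K : Set ℝ) (hK : IsCompact K) (hKne : K.Nonempty) (c d : ℝ) (hcd : c < d) :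
    ∃ (N : ℕ) (a b : Fin N → ℝ), 1 ≤ N ∧ (∀ i, a i < b i) ∧
      K + Set.Icc c d = ⋃ i, Set.Icc (a i) (b i) := by
  set ε : ℝ := (d - c) / 2 with hε
  have hε0 : 0 < ε := by rw [hε]; linarith
  obtain ⟨x₀, hx₀⟩ := hKne
  obtain ⟨t, htK, hcov⟩ := hK.elim_nhds_subcover (fun x => Metric.ball x ε)
    (fun x _ => Metric.ball_mem_nhds x hε0)
  set F : Finset ℝ := insert x₀ t with hF
  set N := F.card with hN
  have hN1 : 1 ≤ N := Finset.card_pos.mpr ⟨x₀, Finset.mem_insert_self _ _⟩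
  let e : Fin N ≃ {y // y ∈ F} := F.equivFin.symm
  have hFK : ∀ y ∈ F, y ∈ K := by
    intro y hy
    rcases Finset.mem_insert.mp hy with rfl | hy
    · exact hx₀
    · exact htK y hy
  set Ks : Fin N → Set ℝ := fun i => K ∩ Set.Icc ((e i : ℝ) - ε) ((e i : ℝ) + ε) with hKs
  have hKsc : ∀ i, IsCompact (Ks i) := fun i => hK.inter_right isClosed_Icc
  have hKsne : ∀ i, (Ks i).Nonempty := by
    intro i
    exact ⟨(e i : ℝ), hFK _ (e i).2, by constructor <;> linarith⟩
  have hKssub : ∀ i, Ks i ⊆ Set.Icc ((e i : ℝ) - (d - c) / 2) ((e i : ℝ) + (d - c) / 2) :=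
    fun i => Set.inter_subset_right
  have key : ∀ i, Ks i + Set.Icc c d = Set.Icc (sInf (Ks i) + c) (sSup (Ks i) + d) :=
    fun i => add_Icc_eq_Icc_of_small _ (hKsc i) (hKsne i) c d hcd _ (hKssub i)
  refine ⟨N, fun i => sInf (Ks i) + c, fun i => sSup (Ks i) + d, hN1, ?_, ?_⟩
  · intro i
    show sInf (Ks i) + c < sSup (Ks i) + d
    have := csInf_le_csSup (hKsne i) (hKsc i).bddBelow (hKsc i).bddAbove
    linarith
  · ext s
    constructor
    · rintro ⟨y, hy, u, hu, rfl⟩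
      have := hcov hy
      rw [Set.mem_iUnion₂] at this
      obtain ⟨x, hxt, hxball⟩ := this
      have hxF : x ∈ F := Finset.mem_insert_of_mem hxt
      refine Set.mem_iUnion.mpr ⟨e.symm ⟨x, hxF⟩, ?_⟩
      rw [← key]
      have hball : y ∈ Set.Icc (x - ε) (x + ε) := by
        rw [Real.ball_eq_Ioo] at hxball
        exact Set.Ioo_subset_Icc_self hxball
      refine ⟨y, ⟨hy, ?_⟩, u, hu, rfl⟩
      simpa using hball
    · intro hs
      rw [Set.mem_iUnion] at hs
      obtain ⟨i, hi⟩ := hs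
      rw [← key] at hi
      exact Set.add_subset_add_right (Set.inter_subset_left) hi
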